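/- Let G be a good labeled simple graph (every 2-path with differently labeled edges a–x–b satisfies l(ax)=b or l(xb)=a, and no edge has a label equal to one of its endpoints). If a vertex x is incident to edges with exactly 3 different labels, then x has exactly 3 incident edges, and they have the form: edge xa with label b, edge xb with label c, edge xc with label a, for some distinct vertices a, b, c. -/
import Mathlib

lemma stmt13_aux {V : Type*} (Adj : V → V → Prop) (l : V → V → V)
    (hsymm : ∀ a b, Adj a b → Adj b a)
    (hlsymm : ∀ a b, Adj a b → l a b = l b a)
    (hself : ∀ a b, Adj a b → l a b ≠ a ∧ l a b ≠ b)
    (hgood : ∀ a x b, a ≠ b → Adj a x → Adj x b → l a x ≠ l x b →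
      l a x = b ∨ l x b = a)
    (x a b c : V) (hxa : Adj x a) (hxb : Adj x b) (hxc : Adj x c)
    (c1 : l x a = b) (c2 : l x b = c) (c3 : l x c = a)
    (hall : ∀ y, Adj x y → l x y = l x a ∨ l x y = l x b ∨ l x y = l x c) :
    ∃ a b c : V, a ≠ b ∧ a ≠ c ∧ b ≠ c ∧
      (∀ y, Adj x y ↔ (y = a ∨ y = b ∨ y = c)) ∧
      l x a = b ∧ l x b = c ∧ l x c = a := by
  have key : ∀ u v, Adj x u → Adj x v → u ≠ v → l x u ≠ l x v →
      l x u = v ∨ l x v = u := by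
    intro u v hu hv huv hl
    have h := hgood u x v huv (hsymm x u hu) hv
      (by rwa [hlsymm u x (hsymm x u hu)])
    rwa [hlsymm u x (hsymm x u hu)] at h
  have hab : a ≠ b := fun h => (hself x a hxa).2 (h ▸ c1)
  have hbc : b ≠ c := fun h => (hself x b hxb).2 (h ▸ c2)
  have hac : a ≠ c := fun h => (hself x c hxc).2 (by rw [c3, h])
  refine ⟨a, b, c, hab, hac, hbc, fun y => ⟨fun hy => ?_, ?_⟩, c1, c2, c3⟩
  · rcases hall y hy with h | h | h
    · -- l x y = b ; show y = a
      rw [c1] at h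
      have hyc : y ≠ c := fun e => hab (by rw [e, c3] at h; exact h)
      rcases key y c hy hxc hyc (by rw [h, c3]; exact fun e => hab e.symm) with h' | h'
      · exact absurd (h ▸ h') hbc
      · left; exact (c3 ▸ h').symm
    · -- l x y = c ; show y = b
      rw [c2] at h
      have hya : y ≠ a := fun e => hbc (by rw [e, c1] at h; exact h)
      rcases key y a hy hxa hya (by rw [h, c1]; exact fun e => hbc e.symm) with h' | h'
      · exact absurd (h ▸ h').symm hac
      · right; left; exact (c1 ▸ h').symm
    · -- l x y = a ; show y = c
      rw [c3] at h
      have hyb : y ≠ b := fun e => hac (by rw [e, c2] at h; exact h.symm)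
      rcases key y b hy hxb hyb (by rw [h, c2]; exact hac) with h' | h'
      · exact absurd (h ▸ h') hab
      · right; right; exact (c2 ▸ h').symm
  · rintro (rfl | rfl | rfl) <;> assumption

/-- In a good labeled simple graph, if a vertex `x` is incident to edges with exactly
3 different labels, then `x` has exactly 3 incident edges and they have the form
`xa` with label `b`, `xb` with label `c`, `xc` with label `a`. -/
theorem stmt13 {V : Type*} (Adj : V → V → Prop) (l : V → V → V)
    (hsymm : ∀ a b, Adj a b → Adj b a)
    (hirr : ∀ a, ¬ Adj a a)
    (hlsymm : ∀ a b, Adj a b → l a b = l b a)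
    (hself : ∀ a b, Adj a b → l a b ≠ a ∧ l a b ≠ b)
    (hgood : ∀ a x b, a ≠ b → Adj a x → Adj x b → l a x ≠ l x b →
      l a x = b ∨ l x b = a)
    (x : V)
    (h3 : ∃ a b c : V, Adj x a ∧ Adj x b ∧ Adj x c ∧
      l x a ≠ l x b ∧ l x a ≠ l x c ∧ l x b ≠ l x c ∧
      (∀ y, Adj x y → l x y = l x a ∨ l x y = l x b ∨ l x y = l x c)) :
    ∃ a b c : V, a ≠ b ∧ a ≠ c ∧ b ≠ c ∧
      (∀ y, Adj x y ↔ (y = a ∨ y = b ∨ y = c)) ∧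
      l x a = b ∧ l x b = c ∧ l x c = a := by
  obtain ⟨a, b, c, hxa, hxb, hxc, hab, hac, hbc, hall⟩ := h3
  have key : ∀ u v, Adj x u → Adj x v → u ≠ v → l x u ≠ l x v →
      l x u = v ∨ l x v = u := by
    intro u v hu hv huv hl
    have h := hgood u x v huv (hsymm x u hu) hv
      (by rwa [hlsymm u x (hsymm x u hu)])
    rwa [hlsymm u x (hsymm x u hu)] at h
  have nab : a ≠ b := fun e => hab (e ▸ rfl)
  have nac : a ≠ c := fun e => hac (e ▸ rfl)
  have nbc : b ≠ c := fun e => hbc (e ▸ rfl)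
  rcases key a b hxa hxb nab hab with h1 | h1
  · -- l x a = b; then l x c = a, l x b = c
    have h2 : l x c = a := by
      rcases key a c hxa hxc nac hac with h | h
      · exact absurd (h1 ▸ h) nbc
      · exact h
    have h3' : l x b = c := by
      rcases key b c hxb hxc nbc hbc with h | h
      · exact h
      · exact absurd (h2 ▸ h) nab
    exact stmt13_aux Adj l hsymm hlsymm hself hgood x a b c hxa hxb hxc h1 h3' h2 hall
  · -- l x b = a; then l x c = b, l x a = c : cycle a → c → b → a
    have h2 : l x c = b := by
      rcases key b c hxb hxc nbc hbc with h | h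
      · exact absurd (h1 ▸ h) nac
      · exact h
    have h3' : l x a = c := by
      rcases key a c hxa hxc nac hac with h | h
      · exact h
      · exact absurd (h2.symm.trans h).symm nab
    exact stmt13_aux Adj l hsymm hlsymm hself hgood x a c b hxa hxc hxb h3' h2 h1
      (fun y hy => by rcases hall y hy with h | h | h <;> tauto)
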